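/- For all positive integers r and k, the matching width of the graph CT_{r,k} is at least rk/2. -/

import Mathlib

/-- The complete binary tree of height `r`, with nodes heap-indexed by
`Fin (2^(r+1) - 1)`: the children of node `i` are `2*i+1` and `2*i+2`. -/
def treeGraph (r : ℕ) : SimpleGraph (Fin (2 ^ (r + 1) - 1)) :=
  SimpleGraph.fromRel (fun i j => (j : ℕ) = 2 * (i : ℕ) + 1 ∨ (j : ℕ) = 2 * (i : ℕ) + 2)

/-- The graph `CT_{r,k}`: each node of the complete binary tree of height `r`
is replaced by a clique of `k` vertices, and for each tree edge all vertices of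
the two corresponding cliques are mutually adjacent. -/
def CT (r k : ℕ) : SimpleGraph (Fin (2 ^ (r + 1) - 1) × Fin k) :=
  SimpleGraph.fromRel (fun a b => a.1 = b.1 ∨ (treeGraph r).Adj a.1 b.1)

/-- `M` is a matching of `G` all of whose edges cross the cut `(A, Aᶜ)`:
every element of `M` is an edge of `G` with one end in `A` and the other
outside `A`, and no two distinct elements of `M` share a vertex. -/
def IsCutMatching {V : Type} (G : SimpleGraph V) (A : Set V) (M : Finset (Sym2 V)) : Prop :=
  (∀ e ∈ M, e ∈ G.edgeSet) ∧
  (∀ e ∈ M, ∃ u v : V, e = s(u, v) ∧ u ∈ A ∧ v ∉ A) ∧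
  (∀ e₁ ∈ M, ∀ e₂ ∈ M, e₁ ≠ e₂ → ∀ x : V, x ∈ e₁ → x ∉ e₂)

/-- The matching width of `G` is at most `w`: some ordering of the vertices
is such that, for every prefix, every matching consisting of edges between
the prefix and the rest has size at most `w`. -/
def mwLE {V : Type} [Fintype V] (G : SimpleGraph V) (w : ℕ) : Prop :=
  ∃ σ : Fin (Fintype.card V) ≃ V,
    ∀ (i : ℕ) (M : Finset (Sym2 V)),
      IsCutMatching G {v : V | ((σ.symm v : Fin (Fintype.card V)) : ℕ) < i} M →
        M.card ≤ w

/-- The matching width of a finite graph. -/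
noncomputable def mw {V : Type} [Fintype V] (G : SimpleGraph V) : ℕ :=
  sInf {w | mwLE G w}

open Finset

namespace CTaux



/-- parent in heap indexing -/
def anc (y : ℕ) : ℕ := (y - 1) / 2

lemma anc_le (y : ℕ) : anc y ≤ y := Nat.le_of_lt_succ (by unfold anc; omega)

lemma anc_lt {y : ℕ} (hy : y ≠ 0) : anc y < y := by unfold anc; omega

lemma anc_spec {y : ℕ} (hy : y ≠ 0) : y = 2 * anc y + 1 ∨ y = 2 * anc y + 2 := by
  unfold anc; omega

lemma anc_iter_le (m y : ℕ) : anc^[m] y ≤ y := by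
  induction m generalizing y with
  | zero => simp
  | succ n ih =>
    rw [Function.iterate_succ_apply]
    exact le_trans (ih (anc y)) (anc_le y)

lemma anc_iter_zero (m : ℕ) : anc^[m] 0 = 0 := by
  induction m with
  | zero => rfl
  | succ n ih => rw [Function.iterate_succ_apply] ; simpa [anc] using ih

/-- y is in the subtree rooted at x -/
def under (x y : ℕ) : Prop := ∃ m, anc^[m] y = x

lemma under_refl (x : ℕ) : under x x := ⟨0, rfl⟩

lemma under_trans {x y z : ℕ} (h1 : under y z) (h2 : under x y) : under x z := by
  obtain ⟨m, hm⟩ := h1; obtain ⟨m', hm'⟩ := h2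
  exact ⟨m' + m, by rw [Function.iterate_add_apply, hm, hm']⟩

lemma under_anc {x y : ℕ} (h : under x y) (hne : y ≠ x) : under x (anc y) := by
  obtain ⟨m, hm⟩ := h
  cases m with
  | zero => exact absurd hm hne
  | succ n => exact ⟨n, by rw [Function.iterate_succ_apply] at hm; exact hm⟩

lemma under_zero {x : ℕ} (h : under x 0) : x = 0 := by
  obtain ⟨m, hm⟩ := h; rw [anc_iter_zero] at hm; omega

lemma under_ne_zero {x y : ℕ} (h : under x y) (hne : y ≠ x) : y ≠ 0 := by
  rintro rfl; exact hne (under_zero h).symm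

lemma under_child {x y c : ℕ} (h : under x y) (hc : anc c = y) : under x c := by
  obtain ⟨m, hm⟩ := h
  exact ⟨m + 1, by rw [Function.iterate_add_apply]; simpa [hc] ⟩

lemma under_le {x y : ℕ} (h : under x y) : x ≤ y := by
  obtain ⟨m, hm⟩ := h; rw [← hm]; exact anc_iter_le m y

lemma under_anc_le {x y : ℕ} (h : under x y) (hne : y ≠ x) : x ≤ anc y :=
  under_le (under_anc h hne)

noncomputable instance : DecidablePred (under x) := fun _ => Classical.propDecidable _

open Finset

variable {r k : ℕ}

/-- parent as a Fin -/
def parF (y : Fin (2 ^ (r + 1) - 1)) : Fin (2 ^ (r + 1) - 1) :=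
  ⟨anc y, lt_of_le_of_lt (anc_le _) y.2⟩

/-- subtree of x as a Finset -/
noncomputable def sub (x : Fin (2 ^ (r + 1) - 1)) : Finset (Fin (2 ^ (r + 1) - 1)) :=
  univ.filter (fun y => under (x : ℕ) (y : ℕ))

lemma mem_sub {x y : Fin (2 ^ (r + 1) - 1)} : y ∈ sub x ↔ under (x : ℕ) (y : ℕ) := by
  simp [sub]

lemma self_mem_sub (x : Fin (2 ^ (r + 1) - 1)) : x ∈ sub x := mem_sub.2 (under_refl _)

lemma parF_mem_sub {x y : Fin (2 ^ (r + 1) - 1)} (hy : y ∈ sub x) (hne : y ≠ x) :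
    parF y ∈ sub x := by
  refine mem_sub.2 ?_
  exact under_anc (mem_sub.1 hy) (fun h => hne (Fin.ext h))

lemma ne_zero_of_mem_sub {x y : Fin (2 ^ (r + 1) - 1)} (hy : y ∈ sub x) (hne : y ≠ x) :
    (y : ℕ) ≠ 0 :=
  under_ne_zero (mem_sub.1 hy) (fun h => hne (Fin.ext h))

lemma sub_subset_sub {x g : Fin (2 ^ (r + 1) - 1)} (h : g ∈ sub x) : sub g ⊆ sub x := by
  intro y hy
  exact mem_sub.2 (under_trans (mem_sub.1 hy) (mem_sub.1 h))

lemma mem_sub_of_parF {g y : Fin (2 ^ (r + 1) - 1)} (h : parF y ∈ sub g) : y ∈ sub g :=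
  mem_sub.2 (under_child (mem_sub.1 h) rfl)

/-- tree adjacency of parent and child -/
lemma adj_parF (y : Fin (2 ^ (r + 1) - 1)) (hy : (y : ℕ) ≠ 0) :
    (treeGraph r).Adj (parF y) y := by
  rw [treeGraph, SimpleGraph.fromRel_adj]
  constructor
  · intro h
    have h1 : anc (y : ℕ) = (y : ℕ) := by
      simpa [parF, Fin.ext_iff] using congrArg Fin.val h
    exact absurd h1 (anc_lt hy).ne
  · left
    have := anc_spec hy
    simpa [parF] using this

/-- boundary lemma: a connected-ish region (parent-closed with top) with a
nonempty proper subset U has a tree edge from U to R \ U. -/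
lemma boundary {ρ : Fin (2 ^ (r + 1) - 1)} {R U : Finset (Fin (2 ^ (r + 1) - 1))}
    (hRtop : ∀ y ∈ R, y ≠ ρ → parF y ∈ R ∧ (y : ℕ) ≠ 0)
    (hUR : U ⊆ R) (hU : U.Nonempty) (hprop : (R \ U).Nonempty) :
    ∃ u ∈ U, ∃ v ∈ R, v ∉ U ∧ (treeGraph r).Adj u v := by
  by_cases hρ : ρ ∈ U
  · -- take minimal element of R \ U
    set v := (R \ U).min' hprop with hv
    have hvmem : v ∈ R \ U := (R \ U).min'_mem hprop
    have hvR : v ∈ R := (mem_sdiff.1 hvmem).1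
    have hvU : v ∉ U := (mem_sdiff.1 hvmem).2
    have hvρ : v ≠ ρ := fun h => hvU (h ▸ hρ)
    obtain ⟨hpR, hv0⟩ := hRtop v hvR hvρ
    have hlt : parF v < v := by
      simp only [Fin.lt_def, parF]; exact anc_lt hv0
    have hpU : parF v ∈ U := by
      by_contra hc
      have : v ≤ parF v := (R \ U).min'_le _ (mem_sdiff.2 ⟨hpR, hc⟩)
      exact absurd (lt_of_le_of_lt this hlt) (lt_irrefl _)
    exact ⟨parF v, hpU, v, hvR, hvU, adj_parF v hv0⟩
  · set u := U.min' hU with hu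
    have huU : u ∈ U := U.min'_mem hU
    have huR : u ∈ R := hUR huU
    have huρ : u ≠ ρ := fun h => hρ (h ▸ huU)
    obtain ⟨hpR, hu0⟩ := hRtop u huR huρ
    have hlt : parF u < u := by
      simp only [Fin.lt_def, parF]; exact anc_lt hu0
    have hpU : parF u ∉ U := by
      intro hc
      have : u ≤ parF u := U.min'_le _ hc
      exact absurd (lt_of_le_of_lt this hlt) (lt_irrefl _)
    exact ⟨u, huU, parF u, hpR, hpU, (adj_parF u hu0).symm⟩

/-- CT adjacency within a clique -/
lemma ctAdj_clique {a b : Fin (2 ^ (r + 1) - 1) × Fin k} (h1 : a.1 = b.1) (h : a ≠ b) :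
    (CT r k).Adj a b := by
  rw [CT, SimpleGraph.fromRel_adj]
  exact ⟨h, Or.inl (Or.inl h1)⟩

/-- CT adjacency along a tree edge -/
lemma ctAdj_tree {a b : Fin (2 ^ (r + 1) - 1) × Fin k} (h : (treeGraph r).Adj a.1 b.1) :
    (CT r k).Adj a b := by
  rw [CT, SimpleGraph.fromRel_adj]
  exact ⟨fun hab => h.ne (congrArg Prod.fst hab), Or.inl (Or.inr h)⟩


open Finset

variable {r k : ℕ}

abbrev Vrk (r k : ℕ) := Fin (2 ^ (r + 1) - 1) × Fin k

variable (σ : Fin (Fintype.card (Vrk r k)) ≃ Vrk r k)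

/-- position of a vertex in the ordering -/
def pos (v : Vrk r k) : ℕ := ((σ.symm v : Fin (Fintype.card (Vrk r k))) : ℕ)

/-- vertices of cliques of `S` in the prefix of length `t` -/
noncomputable def AV (S : Finset (Fin (2 ^ (r + 1) - 1))) (t : ℕ) : Finset (Vrk r k) :=
  univ.filter (fun v => v.1 ∈ S ∧ pos σ v < t)

/-- vertices of cliques of `S` outside the prefix of length `t` -/
noncomputable def BV (S : Finset (Fin (2 ^ (r + 1) - 1))) (t : ℕ) : Finset (Vrk r k) :=
  univ.filter (fun v => v.1 ∈ S ∧ ¬ pos σ v < t)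

lemma mem_AV {S t} {v : Vrk r k} : v ∈ AV σ S t ↔ v.1 ∈ S ∧ pos σ v < t := by simp [AV]
lemma mem_BV {S t} {v : Vrk r k} : v ∈ BV σ S t ↔ v.1 ∈ S ∧ ¬ pos σ v < t := by simp [BV]

lemma AV_disj_BV {S S' : Finset (Fin (2 ^ (r + 1) - 1))} {t : ℕ} :
    Disjoint (AV σ S t) (BV σ S' t) := by
  rw [Finset.disjoint_left]
  intro v hv hv'
  exact (mem_BV σ |>.1 hv').2 (mem_AV σ |>.1 hv).2

lemma AV_mono_t {S : Finset (Fin (2 ^ (r + 1) - 1))} {t t' : ℕ} (h : t ≤ t') :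
    AV σ S t ⊆ AV σ S t' := by
  intro v hv; rw [mem_AV] at *; exact ⟨hv.1, lt_of_lt_of_le hv.2 h⟩

lemma BV_anti_t {S : Finset (Fin (2 ^ (r + 1) - 1))} {t t' : ℕ} (h : t ≤ t') :
    BV σ S t' ⊆ BV σ S t := by
  intro v hv; rw [mem_BV] at *; exact ⟨hv.1, fun hc => hv.2 (lt_of_lt_of_le hc h)⟩

lemma AV_mono_S {S S' : Finset (Fin (2 ^ (r + 1) - 1))} {t : ℕ} (h : S ⊆ S') :
    AV σ S t ⊆ AV σ S' t := by
  intro v hv; rw [mem_AV] at *; exact ⟨h hv.1, hv.2⟩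

lemma BV_mono_S {S S' : Finset (Fin (2 ^ (r + 1) - 1))} {t : ℕ} (h : S ⊆ S') :
    BV σ S t ⊆ BV σ S' t := by
  intro v hv; rw [mem_BV] at *; exact ⟨h hv.1, hv.2⟩

lemma card_filter_clique (u : Fin (2 ^ (r + 1) - 1)) :
    (univ.filter (fun v : Vrk r k => v.1 = u)).card = k := by
  have : (univ.filter (fun v : Vrk r k => v.1 = u)) = {u} ×ˢ univ := by
    ext v; rw [Finset.mem_product]; simp
  rw [this, Finset.card_product]
  simp

lemma card_filter_S (S : Finset (Fin (2 ^ (r + 1) - 1))) :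
    (univ.filter (fun v : Vrk r k => v.1 ∈ S)).card = S.card * k := by
  have : (univ.filter (fun v : Vrk r k => v.1 ∈ S)) = S ×ˢ univ := by
    ext v; simp [Finset.mem_product]
  rw [this, Finset.card_product]
  simp

lemma card_AV_add_BV (S : Finset (Fin (2 ^ (r + 1) - 1))) (t : ℕ) :
    (AV σ S t).card + (BV σ S t).card = S.card * k := by
  rw [← card_filter_S (k := k) S]
  have h1 : AV σ S t = (univ.filter (fun v : Vrk r k => v.1 ∈ S)).filter
      (fun v => pos σ v < t) := by ext v; simp [AV, and_assoc]
  have h2 : BV σ S t = (univ.filter (fun v : Vrk r k => v.1 ∈ S)).filter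
      (fun v => ¬ pos σ v < t) := by ext v; simp [BV, and_assoc]
  rw [h1, h2]
  exact Finset.card_filter_add_card_filter_not _

lemma AV_card_succ (S : Finset (Fin (2 ^ (r + 1) - 1))) (t : ℕ) :
    (AV σ S (t + 1)).card ≤ (AV σ S t).card + 1 := by
  have hsub : AV σ S (t + 1) ⊆ AV σ S t ∪ univ.filter (fun v : Vrk r k => pos σ v = t) := by
    intro v hv
    rw [mem_AV] at hv
    rcases Nat.lt_succ_iff_lt_or_eq.1 hv.2 with h | h
    · exact Finset.mem_union_left _ (mem_AV σ |>.2 ⟨hv.1, h⟩)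
    · exact Finset.mem_union_right _ (by simp [h])
  calc (AV σ S (t + 1)).card ≤ (AV σ S t ∪ univ.filter (fun v : Vrk r k => pos σ v = t)).card :=
        Finset.card_le_card hsub
    _ ≤ (AV σ S t).card + (univ.filter (fun v : Vrk r k => pos σ v = t)).card :=
        Finset.card_union_le _ _
    _ ≤ (AV σ S t).card + 1 := by
        gcongr
        apply Finset.card_le_one.2
        intro a ha b hb
        simp only [Finset.mem_filter] at ha hb
        have : σ.symm a = σ.symm b := Fin.ext (ha.2.trans hb.2.symm)
        exact σ.symm.injective this

lemma Fprime (t : ℕ) (ρ : Fin (2 ^ (r + 1) - 1)) (R : Finset (Fin (2 ^ (r + 1) - 1)))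
    (hRtop : ∀ y ∈ R, y ≠ ρ → parF y ∈ R ∧ (y : ℕ) ≠ 0)
    (hA : k ≤ (AV σ R t).card) (hB : k ≤ (BV σ R t).card) :
    ∃ M : Finset (Sym2 (Vrk r k)),
      IsCutMatching (CT r k) {v : Vrk r k | pos σ v < t} M ∧
      (∀ e ∈ M, ∀ v : Vrk r k, v ∈ e → v.1 ∈ R) ∧ k ≤ M.card := by
  classical
  set AS := AV σ R t with hAS
  set BS := BV σ R t with hBS
  have hdisj : Disjoint AS BS := AV_disj_BV σ
  set d := AS.card - k with hd
  set ι := {x // x ∈ AS}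
  set tfun : ι → Finset (Vrk r k ⊕ Fin d) := fun x =>
    ((BS.filter (fun y => (CT r k).Adj x.1 y)).image Sum.inl) ∪
      ((univ : Finset (Fin d)).image Sum.inr) with htfun
  -- Hall's condition
  have hall : ∀ s : Finset ι, s.card ≤ (s.biUnion tfun).card := by
    intro s
    rcases s.eq_empty_or_nonempty with rfl | hs
    · simp
    set NBR := BS.filter (fun y => ∃ x ∈ s, (CT r k).Adj x.1 y) with hNBR
    have hsubset : NBR.image Sum.inl ∪ (univ : Finset (Fin d)).image Sum.inr ⊆
        s.biUnion tfun := by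
      intro a ha
      rcases Finset.mem_union.1 ha with ha | ha
      · obtain ⟨y, hy, rfl⟩ := Finset.mem_image.1 ha
        obtain ⟨hyBS, x, hx, hadj⟩ := Finset.mem_filter.1 hy
        refine Finset.mem_biUnion.2 ⟨x, hx, ?_⟩
        exact Finset.mem_union_left _
          (Finset.mem_image_of_mem _ (Finset.mem_filter.2 ⟨hyBS, hadj⟩))
      · obtain ⟨x0, hx0⟩ := hs
        exact Finset.mem_biUnion.2 ⟨x0, hx0, Finset.mem_union_right _ ha⟩
    have hdisj2 : Disjoint (NBR.image Sum.inl)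
        ((univ : Finset (Fin d)).image (Sum.inr : Fin d → Vrk r k ⊕ Fin d)) := by
      rw [Finset.disjoint_left]
      rintro a ha ha'
      obtain ⟨y, _, rfl⟩ := Finset.mem_image.1 ha
      obtain ⟨z, _, hz⟩ := Finset.mem_image.1 ha'
      exact Sum.inl_ne_inr hz.symm
    have hbig : NBR.card + d ≤ (s.biUnion tfun).card := by
      calc NBR.card + d
          = (NBR.image Sum.inl).card +
            ((univ : Finset (Fin d)).image (Sum.inr : Fin d → Vrk r k ⊕ Fin d)).card := by
            rw [Finset.card_image_of_injective _ Sum.inl_injective,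
              Finset.card_image_of_injective _ Sum.inr_injective]
            simp
        _ = (NBR.image Sum.inl ∪
            (univ : Finset (Fin d)).image (Sum.inr : Fin d → Vrk r k ⊕ Fin d)).card :=
            (Finset.card_union_of_disjoint hdisj2).symm
        _ ≤ _ := Finset.card_le_card hsubset
    have hcardι : s.card ≤ AS.card := by
      calc s.card ≤ (univ : Finset ι).card := Finset.card_le_card (Finset.subset_univ s)
        _ = AS.card := by rw [Finset.card_univ, Fintype.card_coe]
    suffices h : s.card ≤ NBR.card + d by omega
    set U := s.image (fun x : ι => (x.1).1) with hU
    have hUR : U ⊆ R := by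
      intro u hu
      obtain ⟨x, _, rfl⟩ := Finset.mem_image.1 hu
      exact ((mem_AV σ).1 x.2).1
    by_cases hcase : R ⊆ U
    · have hBSsub : BS ⊆ NBR := by
        intro y hy
        have : y.1 ∈ U := hcase ((mem_BV σ).1 hy).1
        obtain ⟨x, hx, hxy⟩ := Finset.mem_image.1 this
        refine Finset.mem_filter.2 ⟨hy, x, hx, ?_⟩
        refine ctAdj_clique hxy ?_
        intro hc
        exact Finset.disjoint_left.1 hdisj x.2 (hc ▸ hy)
      have : k ≤ NBR.card := le_trans hB (Finset.card_le_card hBSsub)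
      omega
    · obtain ⟨v0, hv0R, hv0U⟩ := Finset.not_subset.1 hcase
      obtain ⟨u, huU, v, hvR, hvU, hadj⟩ :=
        boundary hRtop hUR (hs.image _) ⟨v0, Finset.mem_sdiff.2 ⟨hv0R, hv0U⟩⟩
      have hBv : BS.filter (fun y => y.1 = v) ⊆ NBR := by
        intro y hy
        obtain ⟨hyBS, hyv⟩ := Finset.mem_filter.1 hy
        obtain ⟨x, hx, hxu⟩ := Finset.mem_image.1 huU
        refine Finset.mem_filter.2 ⟨hyBS, x, hx, ?_⟩
        exact ctAdj_tree (by rw [hxu, hyv]; exact hadj)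
      have hAvdisj : Disjoint (s.image Subtype.val) (AS.filter (fun y => y.1 = v)) := by
        rw [Finset.disjoint_left]
        rintro a ha ha'
        obtain ⟨x, hx, rfl⟩ := Finset.mem_image.1 ha
        have : (x.1).1 ∈ U := Finset.mem_image_of_mem _ hx
        rw [(Finset.mem_filter.1 ha').2] at this
        exact hvU this
      have h1 : s.card + (AS.filter (fun y => y.1 = v)).card ≤ AS.card := by
        rw [← Finset.card_image_of_injective s Subtype.val_injective,
          ← Finset.card_union_of_disjoint hAvdisj]
        apply Finset.card_le_card
        apply Finset.union_subset
        · intro a ha; obtain ⟨x, _, rfl⟩ := Finset.mem_image.1 ha; exact x.2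
        · exact Finset.filter_subset _ _
      have h2 : (AS.filter (fun y => y.1 = v)).card +
          (BS.filter (fun y => y.1 = v)).card = k := by
        have e1 : AS.filter (fun y => y.1 = v) =
            (univ.filter (fun w : Vrk r k => w.1 = v)).filter (fun w => pos σ w < t) := by
          ext w
          simp only [hAS, AV, Finset.mem_filter, Finset.mem_univ, true_and]
          constructor
          · rintro ⟨⟨_, h⟩, h2⟩; exact ⟨h2, h⟩
          · rintro ⟨h2, h⟩; exact ⟨⟨h2 ▸ hvR, h⟩, h2⟩
        have e2 : BS.filter (fun y => y.1 = v) =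
            (univ.filter (fun w : Vrk r k => w.1 = v)).filter (fun w => ¬ pos σ w < t) := by
          ext w
          simp only [hBS, BV, Finset.mem_filter, Finset.mem_univ, true_and]
          constructor
          · rintro ⟨⟨_, h⟩, h2⟩; exact ⟨h2, h⟩
          · rintro ⟨h2, h⟩; exact ⟨⟨h2 ▸ hvR, h⟩, h2⟩
        rw [e1, e2, Finset.card_filter_add_card_filter_not, card_filter_clique]
      have h3 : (BS.filter (fun y => y.1 = v)).card ≤ NBR.card :=
        Finset.card_le_card hBv
      omega
  obtain ⟨f, hfinj, hfmem⟩ :=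
    (Finset.all_card_le_biUnion_card_iff_exists_injective tfun).1 hall
  have hfleft : ∀ x : ι, ∀ y, f x = Sum.inl y → y ∈ BS ∧ (CT r k).Adj x.1 y := by
    intro x y h
    have := hfmem x
    rw [h, htfun] at this
    rcases Finset.mem_union.1 this with h' | h'
    · obtain ⟨y', hy', hy'e⟩ := Finset.mem_image.1 h'
      obtain rfl : y' = y := Sum.inl_injective hy'e
      exact ⟨(Finset.mem_filter.1 hy').1, (Finset.mem_filter.1 hy').2⟩
    · obtain ⟨z, _, hz⟩ := Finset.mem_image.1 h'
      exact absurd hz (by simp)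
  set P := (univ : Finset ι).filter (fun x => (f x).isLeft) with hP
  set g : ι → Sym2 (Vrk r k) := fun x =>
    Sum.elim (fun y => s(x.1, y)) (fun _ => s(x.1, x.1)) (f x) with hg
  set M := P.image g with hM
  -- facts about edges of M
  have hedge : ∀ e ∈ M, ∃ x : ι, ∃ y : Vrk r k, e = s(x.1, y) ∧ y ∈ BS ∧
      (CT r k).Adj x.1 y ∧ f x = Sum.inl y := by
    intro e he
    obtain ⟨x, hx, rfl⟩ := Finset.mem_image.1 he
    have hleft := (Finset.mem_filter.1 hx).2
    obtain ⟨y, hy⟩ := Sum.isLeft_iff.1 hleft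
    obtain ⟨hyBS, hadj⟩ := hfleft x y hy
    exact ⟨x, y, by rw [hg]; simp [hy], hyBS, hadj, hy⟩
  refine ⟨M, ⟨?_, ?_, ?_⟩, ?_, ?_⟩
  · -- edges
    intro e he
    obtain ⟨x, y, rfl, _, hadj, _⟩ := hedge e he
    exact hadj
  · -- cut
    intro e he
    obtain ⟨x, y, rfl, hyBS, _, _⟩ := hedge e he
    exact ⟨x.1, y, rfl, ((mem_AV σ).1 x.2).2, ((mem_BV σ).1 hyBS).2⟩
  · -- disjoint
    intro e1 he1 e2 he2 hne w hw1 hw2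
    obtain ⟨x1, y1, rfl, hy1, _, hf1⟩ := hedge e1 he1
    obtain ⟨x2, y2, rfl, hy2, _, hf2⟩ := hedge e2 he2
    have hx12 : x1 ≠ x2 := by
      rintro rfl
      rw [hf1] at hf2
      obtain rfl : y1 = y2 := Sum.inl_injective hf2
      exact hne rfl
    have hv12 : (x1 : Vrk r k) ≠ x2 := fun h => hx12 (Subtype.ext h)
    have hy12 : y1 ≠ y2 := by
      intro h
      exact hx12 (hfinj (by rw [hf1, hf2, h]))
    rcases Sym2.mem_iff.1 hw1 with rfl | rfl <;> rcases Sym2.mem_iff.1 hw2 with h | h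
    · exact hv12 h
    · exact Finset.disjoint_left.1 hdisj x1.2 (h ▸ hy2)
    · exact Finset.disjoint_left.1 hdisj (h.symm ▸ x2.2) hy1
    · exact hy12 h
  · -- in region
    intro e he w hw
    obtain ⟨x, y, rfl, hyBS, _, _⟩ := hedge e he
    rcases Sym2.mem_iff.1 hw with rfl | rfl
    · exact ((mem_AV σ).1 x.2).1
    · exact ((mem_BV σ).1 hyBS).1
  · -- cardinality
    have hMcard : M.card = P.card := by
      rw [hM]
      apply Finset.card_image_of_injOn
      intro x1 hx1 x2 hx2 hgeq
      obtain ⟨y1, hy1⟩ := Sum.isLeft_iff.1 (Finset.mem_filter.1 hx1).2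
      obtain ⟨y2, hy2⟩ := Sum.isLeft_iff.1 (Finset.mem_filter.1 hx2).2
      have hy1BS := (hfleft x1 y1 hy1).1
      have hy2BS := (hfleft x2 y2 hy2).1
      have : s((x1 : Vrk r k), y1) = s((x2 : Vrk r k), y2) := by
        rw [hg] at hgeq; simpa [hy1, hy2] using hgeq
      rcases Sym2.eq_iff.1 this with ⟨h1, _⟩ | ⟨h1, h2⟩
      · exact Subtype.ext h1
      · exact absurd (h1 ▸ x1.2) (fun hc => Finset.disjoint_left.1 hdisj hc hy2BS)
    set Q := (univ : Finset ι).filter (fun x => ¬ (f x).isLeft) with hQ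
    have hPQ : P.card + Q.card = AS.card := by
      rw [hP, hQ, Finset.card_filter_add_card_filter_not, Finset.card_univ,
        Fintype.card_coe]
    have hQd : Q.card ≤ d := by
      have : Q.card ≤ ((univ : Finset (Fin d)).image Option.some).card := by
        apply Finset.card_le_card_of_injOn (fun x => (f x).getRight?)
        · intro x hx
          have hnl := (Finset.mem_filter.1 hx).2
          obtain ⟨z, hz⟩ : ∃ z, f x = Sum.inr z := by
            cases h : f x with
            | inl y => rw [h] at hnl; simp at hnl
            | inr z => exact ⟨z, rfl⟩
          simp only [hz]
          simp
        · intro x1 hx1 x2 hx2 heq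
          have hnl1 := (Finset.mem_filter.1 (by exact hx1 : x1 ∈ Q)).2
          have hnl2 := (Finset.mem_filter.1 (by exact hx2 : x2 ∈ Q)).2
          obtain ⟨z1, hz1⟩ : ∃ z, f x1 = Sum.inr z := by
            cases h : f x1 with
            | inl y => rw [h] at hnl1; simp at hnl1
            | inr z => exact ⟨z, rfl⟩
          obtain ⟨z2, hz2⟩ : ∃ z, f x2 = Sum.inr z := by
            cases h : f x2 with
            | inl y => rw [h] at hnl2; simp at hnl2
            | inr z => exact ⟨z, rfl⟩
          have heq' : (f x1).getRight? = (f x2).getRight? := heq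
          rw [hz1, hz2] at heq'
          simp only [Sum.getRight?] at heq'
          apply hfinj
          rw [hz1, hz2, Option.some_inj.1 heq']
      calc Q.card ≤ _ := this
        _ = d := by
          rw [Finset.card_image_of_injective _ (Option.some_injective _)]
          simp
    omega


lemma exists_balanced_time (hk : 1 ≤ k) (S : Finset (Fin (2 ^ (r + 1) - 1)))
    (hS : 2 ≤ S.card) :
    ∃ t, k ≤ (AV σ S t).card ∧ k ≤ (BV σ S t).card := by
  have hfull : (AV σ S (Fintype.card (Vrk r k))).card = S.card * k := by
    have : AV σ S (Fintype.card (Vrk r k)) = univ.filter (fun v : Vrk r k => v.1 ∈ S) := by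
      ext v
      simp only [AV, Finset.mem_filter, Finset.mem_univ, true_and, and_iff_left_iff_imp]
      intro _
      have h := (σ.symm v).isLt
      simpa [pos] using h
    rw [this, card_filter_S]
  have hex : ∃ t, k ≤ (AV σ S t).card := by
    refine ⟨Fintype.card (Vrk r k), ?_⟩
    rw [hfull]
    calc k = 1 * k := (one_mul k).symm
      _ ≤ S.card * k := Nat.mul_le_mul_right k (by omega)
  set t := Nat.find hex with ht
  have h1 : k ≤ (AV σ S t).card := Nat.find_spec hex
  have h2 : (AV σ S t).card ≤ k := by
    match ht' : t with
    | 0 =>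
      have : AV σ S 0 = ∅ := by ext v; simp [AV]
      rw [this]; simp
    | t' + 1 =>
      have hmin : ¬ k ≤ (AV σ S t').card := Nat.find_min hex (by omega)
      have := AV_card_succ σ S t'
      omega
  have heq : (AV σ S t).card = k := le_antisymm h2 h1
  refine ⟨t, h1, ?_⟩
  have := card_AV_add_BV σ S t
  have : (BV σ S t).card = S.card * k - k := by omega
  rw [this]
  calc k = 2 * k - k := by omega
    _ ≤ S.card * k - k := by
        have : 2 * k ≤ S.card * k := Nat.mul_le_mul_right k hS
        omega

lemma under_comparable {a b y : ℕ} (ha : under a y) (hb : under b y) :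
    under a b ∨ under b a := by
  obtain ⟨m, hm⟩ := ha
  obtain ⟨m', hm'⟩ := hb
  rcases le_total m m' with h | h
  · right
    refine ⟨m' - m, ?_⟩
    rw [← hm, ← Function.iterate_add_apply, Nat.sub_add_cancel h, hm']
  · left
    refine ⟨m - m', ?_⟩
    rw [← hm', ← Function.iterate_add_apply, Nat.sub_add_cancel h, hm]

/-- distinct grandchildren have disjoint subtrees -/
lemma sub_disjoint {a b : Fin (2 ^ (r + 1) - 1)}
    (hnab : ¬ under (a : ℕ) (b : ℕ)) (hnba : ¬ under (b : ℕ) (a : ℕ)) :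
    Disjoint (sub a) (sub b) := by
  rw [Finset.disjoint_left]
  intro y hya hyb
  rcases under_comparable (mem_sub.1 hya) (mem_sub.1 hyb) with h | h
  · exact hnab h
  · exact hnba h

lemma not_under_far {a b x : ℕ} (ha : 4 * x + 3 ≤ a) (hb : b ≤ 4 * x + 6) (hab : a ≠ b) :
    ¬ under a b := by
  intro h
  have h1 : a ≤ anc b := under_anc_le h (fun hc => hab hc.symm)
  unfold anc at h1
  omega

/-- the region `sub x \ sub g` is parent-closed with top `x` -/
lemma region_top (x g : Fin (2 ^ (r + 1) - 1)) :
    ∀ y ∈ sub x \ sub g, y ≠ x → parF y ∈ sub x \ sub g ∧ (y : ℕ) ≠ 0 := by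
  intro y hy hne
  obtain ⟨hyx, hyg⟩ := Finset.mem_sdiff.1 hy
  refine ⟨Finset.mem_sdiff.2 ⟨parF_mem_sub hyx hne, ?_⟩, ne_zero_of_mem_sub hyx hne⟩
  intro hc
  exact hyg (mem_sub_of_parF hc)

lemma sub_top (x : Fin (2 ^ (r + 1) - 1)) :
    ∀ y ∈ sub x, y ≠ x → parF y ∈ sub x ∧ (y : ℕ) ≠ 0 := by
  intro y hy hne
  exact ⟨parF_mem_sub hy hne, ne_zero_of_mem_sub hy hne⟩

lemma child_mem_sub {x : Fin (2 ^ (r + 1) - 1)} {c : Fin (2 ^ (r + 1) - 1)}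
    (hc : anc (c : ℕ) = (x : ℕ)) : c ∈ sub x :=
  mem_sub.2 ⟨1, by simpa using hc⟩

lemma two_le_card_sub {x : Fin (2 ^ (r + 1) - 1)} (hb : 2 * (x : ℕ) + 1 < 2 ^ (r + 1) - 1) :
    2 ≤ (sub x).card := by
  have h1 : (⟨2 * (x : ℕ) + 1, hb⟩ : Fin (2 ^ (r + 1) - 1)) ∈ sub x :=
    child_mem_sub (by show anc (2 * (x : ℕ) + 1) = (x : ℕ); unfold anc; omega)
  have h2 : x ∈ sub x := self_mem_sub x
  have hne : x ≠ (⟨2 * (x : ℕ) + 1, hb⟩ : Fin (2 ^ (r + 1) - 1)) := by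
    intro h
    have h2 : (x : ℕ) = 2 * (x : ℕ) + 1 := congrArg Fin.val h
    omega
  calc 2 = ({x, ⟨2 * (x : ℕ) + 1, hb⟩} : Finset (Fin (2 ^ (r + 1) - 1))).card := by
        rw [Finset.card_pair hne]
    _ ≤ (sub x).card := Finset.card_le_card (by
        intro y hy
        rcases Finset.mem_insert.1 hy with rfl | hy
        · exact h2
        · rw [Finset.mem_singleton.1 hy]; exact h1)


/-- the package of facts produced at each stage of the induction -/
def GOOD (x : Fin (2 ^ (r + 1) - 1)) (h t : ℕ) (M : Finset (Sym2 (Vrk r k))) : Prop :=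
  IsCutMatching (CT r k) {v : Vrk r k | pos σ v < t} M ∧
  (∀ e ∈ M, ∀ v : Vrk r k, v ∈ e → v.1 ∈ sub x) ∧
  h * k ≤ 2 * M.card ∧ k ≤ (AV σ (sub x) t).card ∧ k ≤ (BV σ (sub x) t).card

lemma main_base (hk : 1 ≤ k) (x : Fin (2 ^ (r + 1) - 1))
    (hb : 2 * (x : ℕ) + 1 < 2 ^ (r + 1) - 1) (h : ℕ) (hh : h ≤ 2) :
    ∃ t M, GOOD σ x h t M := by
  obtain ⟨t, hA, hB⟩ := exists_balanced_time σ hk (sub x) (two_le_card_sub hb)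
  obtain ⟨M, hcut, hsub, hcard⟩ := Fprime σ t x (sub x) (sub_top x) hA hB
  refine ⟨t, M, hcut, hsub, ?_, hA, hB⟩
  calc h * k ≤ 2 * k := Nat.mul_le_mul_right k hh
    _ ≤ 2 * M.card := by omega

lemma main_step (x : Fin (2 ^ (r + 1) - 1)) (m : ℕ)
    (ga gb gc : Fin (2 ^ (r + 1) - 1))
    (hga : sub ga ⊆ sub x) (hgb : sub gb ⊆ sub x) (hgc : sub gc ⊆ sub x)
    (hdab : Disjoint (sub ga) (sub gb)) (hdcb : Disjoint (sub gc) (sub gb))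
    {ta tb tc : ℕ} {Ma Mb Mc : Finset (Sym2 (Vrk r k))}
    (hGa : GOOD σ ga m ta Ma) (hGb : GOOD σ gb m tb Mb) (hGc : GOOD σ gc m tc Mc)
    (h1 : ta ≤ tb) (h2 : tb ≤ tc) :
    ∃ t M, GOOD σ x (m + 2) t M := by
  obtain ⟨hBcut, hBsub, hBcard, -, -⟩ := hGb
  obtain ⟨-, -, -, hAa, -⟩ := hGa
  obtain ⟨-, -, -, -, hCb⟩ := hGc
  set R := sub x \ sub gb with hR
  have hsubaR : sub ga ⊆ R := Finset.subset_sdiff.2 ⟨hga, hdab⟩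
  have hsubcR : sub gc ⊆ R := Finset.subset_sdiff.2 ⟨hgc, hdcb⟩
  have hAR : k ≤ (AV σ R tb).card :=
    le_trans hAa (Finset.card_le_card ((AV_mono_t σ h1).trans (AV_mono_S σ hsubaR)))
  have hBR : k ≤ (BV σ R tb).card :=
    le_trans hCb (Finset.card_le_card ((BV_anti_t σ h2).trans (BV_mono_S σ hsubcR)))
  obtain ⟨MR, ⟨hR1, hR2, hR3⟩, hRsub, hRcard⟩ :=
    Fprime σ tb x R (region_top x gb) hAR hBR
  have hvdisj : ∀ e ∈ Mb, ∀ e' ∈ MR, ∀ w : Vrk r k, w ∈ e → w ∉ e' := by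
    intro e he e' he' w hw hw'
    have h1 : w.1 ∈ sub gb := hBsub e he w hw
    have h2 : w.1 ∈ R := hRsub e' he' w hw'
    exact (Finset.mem_sdiff.1 h2).2 h1
  have hMdisj : Disjoint Mb MR := by
    rw [Finset.disjoint_left]
    intro e he he'
    obtain ⟨u, v, rfl, -, -⟩ := hBcut.2.1 e he
    exact hvdisj _ he _ he' u (Sym2.mem_mk_left u v) (Sym2.mem_mk_left u v)
  refine ⟨tb, Mb ∪ MR, ⟨?_, ?_, ?_⟩, ?_, ?_, ?_, ?_⟩
  · intro e he
    rcases Finset.mem_union.1 he with he | he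
    · exact hBcut.1 e he
    · exact hR1 e he
  · intro e he
    rcases Finset.mem_union.1 he with he | he
    · exact hBcut.2.1 e he
    · exact hR2 e he
  · intro e1 he1 e2 he2 hne w hw1 hw2
    rcases Finset.mem_union.1 he1 with he1 | he1 <;> rcases Finset.mem_union.1 he2 with he2 | he2
    · exact hBcut.2.2 e1 he1 e2 he2 hne w hw1 hw2
    · exact hvdisj e1 he1 e2 he2 w hw1 hw2
    · exact hvdisj e2 he2 e1 he1 w hw2 hw1
    · exact hR3 e1 he1 e2 he2 hne w hw1 hw2
  · intro e he w hw
    rcases Finset.mem_union.1 he with he | he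
    · exact hgb (hBsub e he w hw)
    · exact (Finset.mem_sdiff.1 (hRsub e he w hw)).1
  · rw [Finset.card_union_of_disjoint hMdisj]
    have hc2 : 2 * k ≤ 2 * MR.card := by omega
    calc (m + 2) * k = m * k + 2 * k := by ring
      _ ≤ 2 * Mb.card + 2 * MR.card := Nat.add_le_add hBcard hc2
      _ = 2 * (Mb.card + MR.card) := by ring
  · exact le_trans hAR (Finset.card_le_card (AV_mono_S σ (Finset.sdiff_subset)))
  · exact le_trans hBR (Finset.card_le_card (BV_mono_S σ (Finset.sdiff_subset)))

lemma under_grand {x y : ℕ} (h : anc (anc y) = x) : under x y := by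
  refine ⟨2, ?_⟩
  rw [show (2 : ℕ) = 1 + 1 from rfl, Function.iterate_add_apply]
  simpa using h

lemma main_ind (hk : 1 ≤ k) :
    ∀ h, 1 ≤ h → ∀ x : Fin (2 ^ (r + 1) - 1),
      ((x : ℕ) + 2) * 2 ^ h ≤ 2 ^ (r + 1) → ∃ t M, GOOD σ x h t M := by
  intro h
  induction h using Nat.strong_induction_on with
  | _ h IH =>
    intro hh x hx
    have hpow : 2 ≤ 2 ^ h := by
      calc 2 = 2 ^ 1 := rfl
        _ ≤ 2 ^ h := Nat.pow_le_pow_right (by norm_num) hh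
    have hx2 : ((x : ℕ) + 2) * 2 ≤ 2 ^ (r + 1) :=
      le_trans (Nat.mul_le_mul_left _ hpow) hx
    have hxb : 2 * (x : ℕ) + 1 < 2 ^ (r + 1) - 1 := by omega
    by_cases hcase : h ≤ 2
    · exact main_base σ hk x hxb h hcase
    · have hh2 : 2 ≤ h := by omega
      have hm1 : 1 ≤ h - 2 := by omega
      have h8 : ((x : ℕ) * 4 + 8) * 2 ^ (h - 2) ≤ 2 ^ (r + 1) := by
        have e1 : ((x : ℕ) * 4 + 8) * 2 ^ (h - 2) = ((x : ℕ) + 2) * (2 ^ (h - 2) * 4) := by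
          ring
        have e2 : 2 ^ (h - 2) * 4 = 2 ^ h := by
          rw [show (4 : ℕ) = 2 ^ 2 from rfl, ← pow_add, Nat.sub_add_cancel hh2]
        rw [e1, e2]; exact hx
      have hpow2 : 2 ≤ 2 ^ (h - 2) := by
        calc 2 = 2 ^ 1 := rfl
          _ ≤ 2 ^ (h - 2) := Nat.pow_le_pow_right (by norm_num) hm1
      have h16 : ((x : ℕ) * 4 + 8) * 2 ≤ 2 ^ (r + 1) :=
        le_trans (Nat.mul_le_mul_left _ hpow2) h8
      have hgbound : ∀ c : ℕ, c ≤ 4 * (x : ℕ) + 6 → c < 2 ^ (r + 1) - 1 := by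
        intro c hc; omega
      set ga : Fin (2 ^ (r + 1) - 1) := ⟨4 * (x : ℕ) + 3, hgbound _ (by omega)⟩ with hga
      set gb : Fin (2 ^ (r + 1) - 1) := ⟨4 * (x : ℕ) + 4, hgbound _ (by omega)⟩ with hgb
      set gc : Fin (2 ^ (r + 1) - 1) := ⟨4 * (x : ℕ) + 5, hgbound _ (by omega)⟩ with hgc
      have hva : ((ga : ℕ) + 2) * 2 ^ (h - 2) ≤ 2 ^ (r + 1) :=
        le_trans (Nat.mul_le_mul_right _ (by show 4 * (x : ℕ) + 3 + 2 ≤ _; omega)) h8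
      have hvb : ((gb : ℕ) + 2) * 2 ^ (h - 2) ≤ 2 ^ (r + 1) :=
        le_trans (Nat.mul_le_mul_right _ (by show 4 * (x : ℕ) + 4 + 2 ≤ _; omega)) h8
      have hvc : ((gc : ℕ) + 2) * 2 ^ (h - 2) ≤ 2 ^ (r + 1) :=
        le_trans (Nat.mul_le_mul_right _ (by show 4 * (x : ℕ) + 5 + 2 ≤ _; omega)) h8
      obtain ⟨ta, Ma, hGa⟩ := IH (h - 2) (by omega) hm1 ga hva
      obtain ⟨tb, Mb, hGb⟩ := IH (h - 2) (by omega) hm1 gb hvb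
      obtain ⟨tc, Mc, hGc⟩ := IH (h - 2) (by omega) hm1 gc hvc
      have hsa : sub ga ⊆ sub x := sub_subset_sub (mem_sub.2 (under_grand (by
        show anc (anc (4 * (x : ℕ) + 3)) = (x : ℕ); unfold anc; omega)))
      have hsb : sub gb ⊆ sub x := sub_subset_sub (mem_sub.2 (under_grand (by
        show anc (anc (4 * (x : ℕ) + 4)) = (x : ℕ); unfold anc; omega)))
      have hsc : sub gc ⊆ sub x := sub_subset_sub (mem_sub.2 (under_grand (by
        show anc (anc (4 * (x : ℕ) + 5)) = (x : ℕ); unfold anc; omega)))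
      have vga : (ga : ℕ) = 4 * (x : ℕ) + 3 := rfl
      have vgb : (gb : ℕ) = 4 * (x : ℕ) + 4 := rfl
      have vgc : (gc : ℕ) = 4 * (x : ℕ) + 5 := rfl
      have dab : Disjoint (sub ga) (sub gb) :=
        sub_disjoint (not_under_far (x := (x : ℕ)) (by omega) (by omega) (by omega))
          (not_under_far (x := (x : ℕ)) (by omega) (by omega) (by omega))
      have dac : Disjoint (sub ga) (sub gc) :=
        sub_disjoint (not_under_far (x := (x : ℕ)) (by omega) (by omega) (by omega))
          (not_under_far (x := (x : ℕ)) (by omega) (by omega) (by omega))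
      have dbc : Disjoint (sub gb) (sub gc) :=
        sub_disjoint (not_under_far (x := (x : ℕ)) (by omega) (by omega) (by omega))
          (not_under_far (x := (x : ℕ)) (by omega) (by omega) (by omega))
      have hgoal : (∃ t M, GOOD σ x (h - 2 + 2) t M) → ∃ t M, GOOD σ x h t M := by
        rw [Nat.sub_add_cancel hh2]; exact id
      rcases le_total ta tb with hab | hba <;> rcases le_total tb tc with hbc | hcb <;>
        rcases le_total ta tc with hac | hca
      · exact hgoal (main_step σ x _ ga gb gc hsa hsb hsc dab dbc.symm hGa hGb hGc hab hbc)
      · exact hgoal (main_step σ x _ ga gb gc hsa hsb hsc dab dbc.symm hGa hGb hGc hab hbc)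
      · exact hgoal (main_step σ x _ ga gc gb hsa hsc hsb dac dbc hGa hGc hGb hac hcb)
      · exact hgoal (main_step σ x _ gc ga gb hsc hsa hsb dac.symm dab.symm hGc hGa hGb hca hab)
      · exact hgoal (main_step σ x _ gb ga gc hsb hsa hsc dab.symm dac.symm hGb hGa hGc hba hac)
      · exact hgoal (main_step σ x _ gb gc ga hsb hsc hsa dbc dac hGb hGc hGa hbc hca)
      · exact hgoal (main_step σ x _ gc gb ga hsc hsb hsa dbc.symm dab hGc hGb hGa hcb hba)
      · exact hgoal (main_step σ x _ gc gb ga hsc hsb hsa dbc.symm dab hGc hGb hGa hcb hba)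


end CTaux

/-- For all positive integers `r` and `k`, the matching width of `CT_{r,k}`
is at least `r*k/2`. -/
theorem stmt8 (r k : ℕ) (hr : 1 ≤ r) (hk : 1 ≤ k) :
    ((r : ℝ) * (k : ℝ)) / 2 ≤ (mw (CT r k) : ℝ) := by
  classical
  have hne : {w | mwLE (CT r k) w}.Nonempty := by
    refine ⟨Fintype.card (Sym2 (Fin (2 ^ (r + 1) - 1) × Fin k)),
      (Fintype.equivFin _).symm, ?_⟩
    intro i M _
    simpa using Finset.card_le_univ M
  have hmem : mwLE (CT r k) (mw (CT r k)) := Nat.sInf_mem hne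
  obtain ⟨σ, hσ⟩ := hmem
  have hzlt : 0 < 2 ^ (r + 1) - 1 := by
    have h2 : 2 ≤ 2 ^ (r + 1) := by
      calc 2 = 2 ^ 1 := rfl
        _ ≤ 2 ^ (r + 1) := Nat.pow_le_pow_right (by norm_num) (by omega)
    omega
  obtain ⟨t, M, hcut, -, hcard, -, -⟩ :=
    CTaux.main_ind σ hk r hr (⟨0, hzlt⟩ : Fin (2 ^ (r + 1) - 1)) (by
      show (0 + 2) * 2 ^ r ≤ 2 ^ (r + 1)
      rw [pow_succ]; omega)
  have hle : M.card ≤ mw (CT r k) := hσ t M hcut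
  have hnat : r * k ≤ 2 * mw (CT r k) :=
    le_trans hcard (Nat.mul_le_mul_left 2 hle)
  have hreal : (r : ℝ) * (k : ℝ) ≤ 2 * (mw (CT r k) : ℝ) := by exact_mod_cast hnat
  linarith
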